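/- Let n be a positive integer, let N₁ = R(n,n) and N₂ = 2^{C(N₁,2)}·(n+1). Then every interfered K^1_{N₁,N₂} contains K^1_{n,n} as a pivot-minor. -/

import Mathlib

open SimpleGraph

/-! ### Basic operations: local complementation, pivoting, vertex-minors -/

/-- Local complementation at a vertex `v`: the adjacency between each pair of
neighbours of `v` is toggled. -/
def localComp {V : Type*} (G : SimpleGraph V) (v : V) : SimpleGraph V where
  Adj a b := (G.Adj a b ∧ ¬(G.Adj v a ∧ G.Adj v b)) ∨
    (a ≠ b ∧ ¬ G.Adj a b ∧ G.Adj v a ∧ G.Adj v b)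
  symm := by
    refine ⟨?_⟩
    rintro a b (⟨h1, h2⟩ | ⟨h1, h2, h3, h4⟩)
    · exact Or.inl ⟨h1.symm, fun hc => h2 ⟨hc.2, hc.1⟩⟩
    · exact Or.inr ⟨h1.symm, fun hc => h2 hc.symm, h4, h3⟩
  loopless := by
    refine ⟨?_⟩
    rintro a (⟨h1, _⟩ | ⟨h1, _⟩)
    · exact G.irrefl h1
    · exact h1 rfl

/-- Pivoting an edge `uv`: `G ∧ uv = G * u * v * u`. -/
def pivotG {V : Type*} (G : SimpleGraph V) (u v : V) : SimpleGraph V :=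
  localComp (localComp (localComp G u) v) u

/-- Finite simple graphs, concretely represented on `Fin n`. -/
abbrev FinGraph := Σ n : ℕ, SimpleGraph (Fin n)

/-- One step in the construction of a vertex-minor: pass to an isomorphic copy,
perform a local complementation, or delete a vertex. -/
def VMStep (G H : FinGraph) : Prop :=
  Nonempty (G.2 ≃g H.2) ∨
  (∃ v : Fin G.1, Nonempty ((localComp G.2 v) ≃g H.2)) ∨
  (∃ v : Fin G.1, Nonempty ((G.2.induce {u | u ≠ v}) ≃g H.2))

/-- One step in the construction of a pivot-minor: pass to an isomorphic copy,
pivot an edge, or delete a vertex. -/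
def PMStep (G H : FinGraph) : Prop :=
  Nonempty (G.2 ≃g H.2) ∨
  (∃ u v : Fin G.1, G.2.Adj u v ∧ Nonempty ((pivotG G.2 u v) ≃g H.2)) ∨
  (∃ v : Fin G.1, Nonempty ((G.2.induce {u | u ≠ v}) ≃g H.2))

/-- `H` is a vertex-minor of `G` (both given concretely on `Fin _`). -/
def IsVertexMinorFG (H G : FinGraph) : Prop := Relation.ReflTransGen VMStep G H

/-- `H` is a pivot-minor of `G` (both given concretely on `Fin _`). -/
def IsPivotMinorFG (H G : FinGraph) : Prop := Relation.ReflTransGen PMStep G H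

/-- A finite graph represented concretely on `Fin (Nat.card V)`. -/
noncomputable def toFinGraph {V : Type*} [Finite V] (G : SimpleGraph V) : FinGraph :=
  ⟨Nat.card V, G.comap (Finite.equivFin V).symm⟩

/-- `H` is a vertex-minor of `G`. -/
def HasVertexMinor {V W : Type*} [Finite V] [Finite W]
    (G : SimpleGraph V) (H : SimpleGraph W) : Prop :=
  IsVertexMinorFG (toFinGraph H) (toFinGraph G)

/-- `H` is a pivot-minor of `G`. -/
def HasPivotMinor {V W : Type*} [Finite V] [Finite W]
    (G : SimpleGraph V) (H : SimpleGraph W) : Prop :=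
  IsPivotMinorFG (toFinGraph H) (toFinGraph G)

/-- A class of finite graphs closed under isomorphism, local complementation and
vertex deletion. -/
def VertexMinorClosed (𝒢 : Set FinGraph) : Prop :=
  (∀ G ∈ 𝒢, ∀ H : FinGraph, Nonempty (G.2 ≃g H.2) → H ∈ 𝒢) ∧
  (∀ G ∈ 𝒢, ∀ v : Fin G.1, (⟨G.1, localComp G.2 v⟩ : FinGraph) ∈ 𝒢) ∧
  (∀ G ∈ 𝒢, ∀ v : Fin G.1, toFinGraph (G.2.induce {u | u ≠ v}) ∈ 𝒢)

/-- A class of finite graphs closed under isomorphism, pivoting and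
vertex deletion. -/
def PivotMinorClosed (𝒢 : Set FinGraph) : Prop :=
  (∀ G ∈ 𝒢, ∀ H : FinGraph, Nonempty (G.2 ≃g H.2) → H ∈ 𝒢) ∧
  (∀ G ∈ 𝒢, ∀ u v : Fin G.1, G.2.Adj u v → (⟨G.1, pivotG G.2 u v⟩ : FinGraph) ∈ 𝒢) ∧
  (∀ G ∈ 𝒢, ∀ v : Fin G.1, toFinGraph (G.2.induce {u | u ≠ v}) ∈ 𝒢)

/-! ### Chromatic data -/

/-- The chromatic number, as a natural number (graphs here are finite). -/
noncomputable def chi {V : Type*} (G : SimpleGraph V) : ℕ := G.chromaticNumber.toNat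

/-- The ball of radius `ρ` around `v`: all vertices at distance at most `ρ` from `v`. -/
def ballSet {V : Type*} (G : SimpleGraph V) (v : V) (ρ : ℕ) : Set V :=
  {u | ∃ p : G.Walk v u, p.length ≤ ρ}

/-- `χ^{(ρ)}(G)`: the largest chromatic number of a `ρ`-ball of `G`. -/
noncomputable def chiBall {V : Type*} (G : SimpleGraph V) (ρ : ℕ) : ℕ :=
  ⨆ v : V, chi (G.induce (ballSet G v ρ))

/-- The distance from `u` to `v` is at least `n` (in particular, this holds
vacuously for unreachable pairs). -/
def distGE {V : Type*} (G : SimpleGraph V) (u v : V) (n : ℕ) : Prop :=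
  ∀ p : G.Walk u v, n ≤ p.length

/-- A stable (independent) set of vertices. -/
def IsStableSet {V : Type*} (G : SimpleGraph V) (A : Set V) : Prop :=
  ∀ a ∈ A, ∀ b ∈ A, ¬ G.Adj a b

/-- `A` covers `B`: every vertex of `B` has a neighbour in `A`. -/
def Covers {V : Type*} (G : SimpleGraph V) (A B : Set V) : Prop :=
  ∀ b ∈ B, ∃ a ∈ A, G.Adj a b

/-- `A` and `B` are anti-complete: there are no edges between them. -/
def AntiComplete {V : Type*} (G : SimpleGraph V) (A B : Set V) : Prop :=
  ∀ a ∈ A, ∀ b ∈ B, ¬ G.Adj a b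

/-- An induced path of `G`, given as a walk: it is a path, and the only edges of `G`
between its vertices are the edges of the path. -/
def IsInducedPath {V : Type*} (G : SimpleGraph V) {a b : V} (p : G.Walk a b) : Prop :=
  p.IsPath ∧ ∀ x ∈ p.support, ∀ y ∈ p.support, G.Adj x y → p.toSubgraph.Adj x y
/-! ### Big cliques and bloated trees -/

/-- A big clique: a maximal clique (w.r.t. vertex inclusion) of size at least 3. -/
def IsBigClique {V : Type*} (G : SimpleGraph V) (s : Finset V) : Prop :=
  G.IsClique ↑s ∧ 3 ≤ s.card ∧ ∀ t : Finset V, G.IsClique ↑t → s ⊆ t → t = s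

/-- Two vertices are related when they lie in a common big clique. -/
def bigCliqueRel {V : Type*} (G : SimpleGraph V) (u v : V) : Prop :=
  u = v ∨ ∃ s : Finset V, IsBigClique G s ∧ u ∈ s ∧ v ∈ s

/-- The graph obtained by contracting every big clique to a single vertex. -/
def contractBigCliques {V : Type*} (G : SimpleGraph V) :
    SimpleGraph (Quot (bigCliqueRel G)) where
  Adj a b := a ≠ b ∧ ∃ u v, G.Adj u v ∧ Quot.mk _ u = a ∧ Quot.mk _ v = b
  symm := by
    refine ⟨?_⟩
    rintro a b ⟨hne, u, v, h, hu, hv⟩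
    exact ⟨hne.symm, v, u, h.symm, hv, hu⟩
  loopless := ⟨fun a h => h.1 rfl⟩

/-- A bloated tree: every edge is in at most one big clique, vertices of a big
`k`-clique have degree at most `k`, and contracting all big cliques yields a tree. -/
def IsBloatedTree {V : Type*} (T : SimpleGraph V) : Prop :=
  (∀ u v, T.Adj u v → ∀ s t : Finset V, IsBigClique T s → IsBigClique T t →
    u ∈ s → v ∈ s → u ∈ t → v ∈ t → s = t) ∧
  (∀ s : Finset V, IsBigClique T s → ∀ v ∈ s, (T.neighborSet v).ncard ≤ s.card) ∧
  (contractBigCliques T).IsTree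

/-- A leaf: a vertex of degree at most 1. -/
def IsLeaf {V : Type*} (G : SimpleGraph V) (v : V) : Prop :=
  (G.neighborSet v).ncard ≤ 1

/-- A branching vertex of a bloated tree: a vertex of degree at least 3 that is
not contained in a triangle. -/
def IsBranching {V : Type*} (G : SimpleGraph V) (v : V) : Prop :=
  3 ≤ (G.neighborSet v).ncard ∧ ¬ ∃ a b, G.Adj v a ∧ G.Adj v b ∧ G.Adj a b

/-! ### Dangling paths and contractions -/

/-- The path `p` dangles from `X`: the set of vertices outside `p` with a
neighbour on `p` is exactly `X`. -/
def DanglesFrom {V : Type*} (G : SimpleGraph V) {a b : V} (p : G.Walk a b)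
    (X : Set V) : Prop :=
  {v | v ∉ p.support ∧ ∃ u ∈ p.support, G.Adj v u} = X

/-- The path `p` dangles oddly from `X`: moreover every vertex of `X` has an odd
number of neighbours on `p`. -/
def DanglesOddly {V : Type*} (G : SimpleGraph V) {a b : V} (p : G.Walk a b)
    (X : Set V) : Prop :=
  DanglesFrom G p X ∧ ∀ x ∈ X, Odd ({u | u ∈ p.support ∧ G.Adj x u}.ncard)

/-- Contract the set `S` to the single vertex `a₀` (for `a₀ ∈ S` with `G[S]`
connected this is contraction of all edges inside `S`). -/
def contractSet {V : Type*} (G : SimpleGraph V) (S : Set V) (a₀ : V) :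
    SimpleGraph {w : V // w ∉ S ∨ w = a₀} where
  Adj u v := u ≠ v ∧
    ((u.1 ∉ S ∧ v.1 ∉ S ∧ G.Adj u.1 v.1) ∨
     (u.1 = a₀ ∧ v.1 ∉ S ∧ ∃ s ∈ S, G.Adj s v.1) ∨
     (v.1 = a₀ ∧ u.1 ∉ S ∧ ∃ s ∈ S, G.Adj u.1 s))
  symm := by
    refine ⟨?_⟩
    rintro u v ⟨hne, h⟩
    refine ⟨hne.symm, ?_⟩
    rcases h with ⟨h1, h2, h3⟩ | ⟨h1, h2, s, hs, hadj⟩ | ⟨h1, h2, s, hs, hadj⟩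
    · exact Or.inl ⟨h2, h1, h3.symm⟩
    · exact Or.inr (Or.inr ⟨h1, h2, s, hs, hadj.symm⟩)
    · exact Or.inr (Or.inl ⟨h1, h2, s, hs, hadj.symm⟩)
  loopless := ⟨fun u h => h.1 rfl⟩

/-! ### Ramsey numbers -/

/-- Every graph on `Fin N` contains a clique of size `n` or a stable set of size `m`. -/
def RamseyProp (N n m : ℕ) : Prop :=
  ∀ G : SimpleGraph (Fin N),
    (∃ s : Finset (Fin N), G.IsNClique n s) ∨ (∃ s : Finset (Fin N), Gᶜ.IsNClique m s)

/-- The Ramsey number `R(n,m)`: the least `N` such that every graph on at least `N`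
vertices contains a clique of size `n` or a stable set of size `m`. -/
noncomputable def ramsey (n m : ℕ) : ℕ := sInf {N | ∀ M, N ≤ M → RamseyProp M n m}

/-! ### Subdivided complete bipartite graphs and interfered versions -/

/-- The vertex set of (an interfered) `K¹_{n,m}`: the `x_i`, the `y_j`, and the
subdivision vertices `z_{i,j}`. -/
abbrev IVert (n m : ℕ) := Fin n ⊕ Fin m ⊕ Fin n × Fin m

/-- `K¹_{n,m}`: the complete bipartite graph `K_{n,m}` with every edge subdivided
exactly once. -/
def KOneBip (n m : ℕ) : SimpleGraph (IVert n m) :=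
  SimpleGraph.fromRel (fun a b => ∃ i j,
    (a = Sum.inl i ∧ b = Sum.inr (Sum.inr (i, j))) ∨
    (a = Sum.inr (Sum.inl j) ∧ b = Sum.inr (Sum.inr (i, j))))

/-- The pairs that may be adjacent in an interfered `K¹_{n,m}`. -/
def InterferedAllowed (n m : ℕ) (a b : IVert n m) : Prop :=
  (∃ i j, a = Sum.inl i ∧ b = Sum.inr (Sum.inr (i, j))) ∨
  (∃ i j, a = Sum.inr (Sum.inl j) ∧ b = Sum.inr (Sum.inr (i, j))) ∨
  (∃ (k i : Fin n) (j : Fin m), k < i ∧ a = Sum.inl k ∧ b = Sum.inr (Sum.inr (i, j)))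

/-- An interfered `K¹_{n,m}`: all edges `x_i z_{i,j}` and `z_{i,j} y_j` are present,
and all other edges are of the form `x_k z_{i,j}` with `k < i`. -/
def IsInterfered (n m : ℕ) (G : SimpleGraph (IVert n m)) : Prop :=
  (∀ i j, G.Adj (Sum.inl i) (Sum.inr (Sum.inr (i, j)))) ∧
  (∀ i j, G.Adj (Sum.inr (Sum.inl j)) (Sum.inr (Sum.inr (i, j)))) ∧
  (∀ a b, G.Adj a b → InterferedAllowed n m a b ∨ InterferedAllowed n m b a)
/-! ### Long covers -/

/-- A long cover `(L⁰, L¹, L², L³)` of a set `C`. -/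
def IsLongCover {V : Type*} (G : SimpleGraph V) (L : Fin 4 → Set V) (C : Set V) : Prop :=
  (∀ i j : Fin 4, i ≠ j → Disjoint (L i) (L j)) ∧
  (∀ i : Fin 4, Disjoint (L i) C) ∧
  (G.induce (L 0)).Connected ∧
  Covers G (L 0) (L 1) ∧ Covers G (L 1) (L 2) ∧ Covers G (L 2) (L 3) ∧
  Covers G (L 3) C ∧
  AntiComplete G C (L 0) ∧ AntiComplete G C (L 1) ∧ AntiComplete G C (L 2) ∧
  AntiComplete G (L 0) (L 2) ∧ AntiComplete G (L 0) (L 3) ∧ AntiComplete G (L 1) (L 3)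

/-- A long `q`-cover of a set `C`. -/
def IsLongQCover {V : Type*} (G : SimpleGraph V) {q : ℕ}
    (ℒ : Fin q → Fin 4 → Set V) (C : Set V) : Prop :=
  (∀ i, IsLongCover G (ℒ i) C) ∧
  (∀ i j, i ≠ j →
    Disjoint (ℒ i 0 ∪ ℒ i 1 ∪ ℒ i 2 ∪ ℒ i 3) (ℒ j 0 ∪ ℒ j 1 ∪ ℒ j 2 ∪ ℒ j 3)) ∧
  (∀ i j, i < j →
    AntiComplete G (ℒ j 0 ∪ ℒ j 1 ∪ ℒ j 2) (ℒ i 0 ∪ ℒ i 1 ∪ ℒ i 2 ∪ ℒ i 3))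

/-! ### Multicovers -/

/-- A multicover `(N_x : x ∈ X)` of a set `C`, where `X` is presented as an
injective tuple `x : Fin m → V` (whose ordering is the total order on `X`). -/
def IsMulticover {V : Type*} (G : SimpleGraph V) {m : ℕ}
    (x : Fin m → V) (N : Fin m → Set V) (C : Set V) : Prop :=
  Function.Injective x ∧
  (∀ i, N i ⊆ G.neighborSet (x i)) ∧
  (∀ i, x i ∉ C) ∧
  (∀ i j, x i ∉ N j) ∧
  (∀ i, Disjoint (N i) C) ∧
  (∀ i j, i ≠ j → Disjoint (N i) (N j)) ∧
  (∀ i j, ¬ G.Adj (x i) (x j)) ∧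
  (∀ i, ∀ u ∈ C, ¬ G.Adj (x i) u) ∧
  (∀ i, ∀ u ∈ C, ∃ w ∈ N i, G.Adj w u) ∧
  (∀ i j, i < j → ∀ u ∈ N i, ¬ G.Adj (x j) u)

/-- A pure multicover: no `x ∈ X` has a neighbour in `N_y` for `y ≠ x`. -/
def IsPureMC {V : Type*} (G : SimpleGraph V) {m : ℕ}
    (x : Fin m → V) (N : Fin m → Set V) : Prop :=
  ∀ i j, i ≠ j → ∀ u ∈ N i, ¬ G.Adj (x j) u

/-- An impure multicover: for `x ≺ y`, `x` is complete to `N_y`. -/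
def IsImpureMC {V : Type*} (G : SimpleGraph V) {m : ℕ}
    (x : Fin m → V) (N : Fin m → Set V) : Prop :=
  ∀ i j, i < j → ∀ u ∈ N j, G.Adj (x i) u

section Plumbing

variable {V W : Type*}

@[simp] lemma localComp_adj (G : SimpleGraph V) (w a b : V) :
    (localComp G w).Adj a b ↔ (G.Adj a b ∧ ¬(G.Adj w a ∧ G.Adj w b)) ∨
      (a ≠ b ∧ ¬ G.Adj a b ∧ G.Adj w a ∧ G.Adj w b) := Iff.rfl

/-- comap along an equivalence commutes with local complementation. -/
lemma localComp_comap (e : V ≃ W) (G : SimpleGraph W) (w : W) :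
    (localComp G w).comap ⇑e = localComp (G.comap ⇑e) (e.symm w) := by
  ext a b
  simp only [comap_adj, localComp_adj, Equiv.apply_symm_apply, ne_eq,
    EmbeddingLike.apply_eq_iff_eq]

lemma pivotG_comap (e : V ≃ W) (G : SimpleGraph W) (u v : W) :
    (pivotG G u v).comap ⇑e = pivotG (G.comap ⇑e) (e.symm u) (e.symm v) := by
  simp only [pivotG, localComp_comap]

/-- The canonical isomorphism between the comap along an equivalence and the graph. -/
def isoComapEquiv (e : V ≃ W) (G : SimpleGraph W) : G.comap ⇑e ≃g G :=
  ⟨e, by simp⟩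

/-- The canonical isomorphism for `toFinGraph`. -/
noncomputable def toFinGraphIso [Finite V] (G : SimpleGraph V) : (toFinGraph G).2 ≃g G :=
  isoComapEquiv (Finite.equivFin V).symm G

lemma hpm_of_iso [Finite V] [Finite W] {G : SimpleGraph V} {H : SimpleGraph W}
    (e : G ≃g H) : HasPivotMinor G H := by
  refine Relation.ReflTransGen.single (Or.inl ⟨?_⟩)
  exact ((toFinGraphIso G).trans e).trans (toFinGraphIso H).symm

lemma hpm_trans {U : Type*} [Finite V] [Finite W] [Finite U]
    {G : SimpleGraph V} {H : SimpleGraph W} {K : SimpleGraph U}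
    (h1 : HasPivotMinor G H) (h2 : HasPivotMinor H K) : HasPivotMinor G K :=
  Relation.ReflTransGen.trans h1 h2

lemma hpm_pivot [Finite V] {G : SimpleGraph V} {u v : V} (h : G.Adj u v) :
    HasPivotMinor G (pivotG G u v) := by
  refine Relation.ReflTransGen.single (Or.inr (Or.inl ?_))
  refine ⟨(Finite.equivFin V) u, (Finite.equivFin V) v, ?_, ⟨?_⟩⟩
  · show (G.comap ⇑(Finite.equivFin V).symm).Adj _ _
    simpa using h
  · show pivotG (G.comap ⇑(Finite.equivFin V).symm) _ _ ≃g
      (pivotG G u v).comap ⇑(Finite.equivFin V).symm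
    have := pivotG_comap (Finite.equivFin V).symm G u v
    simp only [Equiv.symm_symm] at this
    rw [← this]

end Plumbing
section Plumbing2

variable {V W : Type*}

/-- Induce along a preimage under an equivalence. -/
def induceComapIso (e : V ≃ W) (G : SimpleGraph W) (S : Set W) :
    ((G.comap ⇑e).induce (⇑e ⁻¹' S)) ≃g G.induce S where
  toEquiv := e.subtypeEquiv (fun a => Iff.rfl)
  map_rel_iff' := Iff.rfl

lemma hpm_iso_right [Finite V] [Finite W] {U : Type*} [Finite U]
    {G : SimpleGraph V} {H : SimpleGraph W} {K : SimpleGraph U}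
    (h : HasPivotMinor G H) (e : H ≃g K) : HasPivotMinor G K :=
  hpm_trans h (hpm_of_iso e)

lemma hpm_iso_left [Finite V] [Finite W] {U : Type*} [Finite U]
    {G : SimpleGraph V} {H : SimpleGraph W} {K : SimpleGraph U}
    (e : G ≃g H) (h : HasPivotMinor H K) : HasPivotMinor G K :=
  hpm_trans (hpm_of_iso e) h

lemma hpm_delete [Finite V] (G : SimpleGraph V) (v : V) :
    HasPivotMinor G (G.induce {u | u ≠ v}) := by
  refine Relation.ReflTransGen.single (Or.inr (Or.inr ?_))
  refine ⟨(Finite.equivFin V) v, ⟨?_⟩⟩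
  have hset : {u : Fin (Nat.card V) | u ≠ (Finite.equivFin V) v} =
      (⇑(Finite.equivFin V).symm) ⁻¹' {u | u ≠ v} := by
    ext u
    simp [Equiv.symm_apply_eq]
  have step : ((G.comap ⇑(Finite.equivFin V).symm).induce
      {u : Fin (Nat.card V) | u ≠ (Finite.equivFin V) v}) ≃g G.induce {u | u ≠ v} := by
    rw [hset]
    exact induceComapIso (Finite.equivFin V).symm G {u | u ≠ v}
  exact step.trans (toFinGraphIso (G.induce {u | u ≠ v})).symm

/-- Composing two vertex-set restrictions. -/
def induceInduceIso (G : SimpleGraph V) (v : V) (S : Set V) (hv : v ∉ S) :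
    ((G.induce {u | u ≠ v}).induce {u | u.1 ∈ S}) ≃g G.induce S where
  toEquiv :=
    { toFun := fun x => ⟨x.1.1, x.2⟩
      invFun := fun y => ⟨⟨y.1, fun h => hv (h ▸ y.2)⟩, y.2⟩
      left_inv := fun x => rfl
      right_inv := fun y => rfl }
  map_rel_iff' := Iff.rfl

lemma hpm_induce_aux (m : ℕ) :
    ∀ (V : Type) [Finite V] (G : SimpleGraph V) (S : Set V), Nat.card V ≤ m →
      HasPivotMinor G (G.induce S) := by
  induction m with
  | zero =>
    intro V _ G S hm
    have : IsEmpty V := by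
      rcases Nat.card_eq_zero.mp (Nat.le_zero.mp hm) with h | h
      · exact h
      · exact absurd h (by exact (not_infinite_iff_finite.mpr ‹_›))
    have : S = Set.univ := Subsingleton.elim _ _
    subst this
    exact hpm_of_iso (induceUnivIso G).symm
  | succ m ih =>
    intro V _ G S hm
    by_cases hS : S = Set.univ
    · subst hS
      exact hpm_of_iso (induceUnivIso G).symm
    · obtain ⟨v, hv⟩ : ∃ v, v ∉ S := by
        by_contra h
        push_neg at h
        exact hS (Set.eq_univ_of_forall h)
      have h1 : HasPivotMinor G (G.induce {u | u ≠ v}) := hpm_delete G v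
      have hcard : Nat.card {u : V // u ≠ v} ≤ m := by
        have h0 : 0 < Nat.card V := Nat.card_pos_iff.mpr ⟨⟨v⟩, ‹_›⟩
        have : Nat.card {u : V // u ≠ v} = Nat.card V - 1 := by
          have h1 : Nat.card {u : V // u ≠ v} + Nat.card {u : V // u = v} = Nat.card V := by
            have he : {u : V // u = v} ⊕ {u : V // u ≠ v} ≃ V := by
              classical exact Equiv.sumCompl (fun u : V => u = v)
            have := Nat.card_congr he
            simpa [Nat.card_sum, Nat.add_comm] using this
          have h2 : Nat.card {u : V // u = v} = 1 := by
            have e2 : {u : V // u = v} ≃ PUnit.{1} :=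
              Equiv.punitOfNonemptyOfSubsingleton
            simp [Nat.card_congr e2]
          omega
        omega
      have h2 := ih {u : V // u ≠ v} (G.induce {u | u ≠ v}) {u | u.1 ∈ S} hcard
      exact hpm_trans h1 (hpm_iso_right h2 (induceInduceIso G v S hv))

lemma hpm_induce {V : Type} [Finite V] (G : SimpleGraph V) (S : Set V) :
    HasPivotMinor G (G.induce S) :=
  hpm_induce_aux (Nat.card V) V G S le_rfl

/-- A graph comapped along an injection is a pivot minor. -/
lemma hpm_comap_inj {V W : Type} [Finite V] [Finite W] (G : SimpleGraph W)
    (f : V → W) (hf : Function.Injective f) :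
    HasPivotMinor G (G.comap f) := by
  refine hpm_iso_right (hpm_induce G (Set.range f)) ?_
  exact SimpleGraph.Iso.symm
    { toEquiv := Equiv.ofInjective f hf
      map_rel_iff' := Iff.rfl }

end Plumbing2
section Ramsey

variable {V : Type} [Fintype V]

lemma induce_compl_eq (G : SimpleGraph V) (S : Set V) :
    (G.induce S)ᶜ = Gᶜ.induce S := by
  ext a b
  simp only [compl_adj, comap_adj, Function.Embedding.coe_subtype, ne_eq]
  constructor
  · rintro ⟨h1, h2⟩
    exact ⟨fun h => h1 (Subtype.ext h), h2⟩
  · rintro ⟨h1, h2⟩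
    exact ⟨fun h => h1 (congrArg Subtype.val h), h2⟩

lemma isNClique_induce_map {G : SimpleGraph V} {S : Set V} {k : ℕ} {s : Finset ↥S}
    (h : (G.induce S).IsNClique k s) :
    G.IsNClique k (s.map (Function.Embedding.subtype _)) := by
  constructor
  · intro x hx y hy hxy
    simp only [Finset.coe_map, Set.mem_image, Finset.mem_coe] at hx hy
    obtain ⟨x', hx', rfl⟩ := hx
    obtain ⟨y', hy', rfl⟩ := hy
    have : x' ≠ y' := fun h' => hxy (congrArg _ h')
    exact h.1 hx' hy' this
  · rw [Finset.card_map]; exact h.2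

/-- Ramsey's theorem, generic form. -/
lemma ramsey_exists : ∀ n m : ℕ, ∃ N : ℕ,
    ∀ (V : Type) [Fintype V] (G : SimpleGraph V), N ≤ Fintype.card V →
      (∃ s : Finset V, G.IsNClique n s) ∨ (∃ s : Finset V, Gᶜ.IsNClique m s) := by
  have main : ∀ k n m : ℕ, n + m ≤ k → ∃ N : ℕ,
      ∀ (V : Type) [Fintype V] (G : SimpleGraph V), N ≤ Fintype.card V →
        (∃ s : Finset V, G.IsNClique n s) ∨ (∃ s : Finset V, Gᶜ.IsNClique m s) := by
    intro k
    induction k with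
    | zero =>
      intro n m hnm
      refine ⟨0, fun V _ G _ => ?_⟩
      have hn : n = 0 := by omega
      subst hn
      exact Or.inl ⟨∅, by simp [SimpleGraph.isNClique_empty]⟩
    | succ k ih =>
      intro n m hnm
      match n, m with
      | 0, m =>
        refine ⟨0, fun V _ G _ => ?_⟩
        exact Or.inl ⟨∅, by simp [SimpleGraph.isNClique_empty]⟩
      | n+1, 0 =>
        refine ⟨0, fun V _ G _ => ?_⟩
        exact Or.inr ⟨∅, by simp [SimpleGraph.isNClique_empty]⟩
      | n+1, m+1 =>
        obtain ⟨N₁, h₁⟩ := ih n (m+1) (by omega)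
        obtain ⟨N₂, h₂⟩ := ih (n+1) m (by omega)
        refine ⟨N₁ + N₂ + 1, fun V _ G hcard => ?_⟩
        classical
        have : 0 < Fintype.card V := by omega
        obtain ⟨v⟩ := Fintype.card_pos_iff.mp this
        set A : Finset V := Finset.univ.filter (fun u => G.Adj v u) with hA
        set B : Finset V := Finset.univ.filter (fun u => ¬ G.Adj v u ∧ u ≠ v) with hB
        have hBcard : A.card + B.card + 1 = Fintype.card V := by
          have hBe : B = (Finset.univ.filter (fun u => ¬ G.Adj v u)).erase v := by
            ext u
            simp only [hB, Finset.mem_filter, Finset.mem_univ, true_and,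
              Finset.mem_erase, ne_eq]
            tauto
          have hv : v ∈ Finset.univ.filter (fun u => ¬ G.Adj v u) := by
            simp
          have h1 : A.card + (Finset.univ.filter (fun u => ¬ G.Adj v u)).card
              = Fintype.card V := by
            rw [hA]
            simpa using Finset.card_filter_add_card_filter_not
              (s := Finset.univ) (p := fun u => G.Adj v u)
          have h2 : B.card = (Finset.univ.filter (fun u => ¬ G.Adj v u)).card - 1 := by
            rw [hBe]; exact Finset.card_erase_of_mem hv
          have h3 : 1 ≤ (Finset.univ.filter (fun u => ¬ G.Adj v u)).card :=
            Finset.card_pos.mpr ⟨v, hv⟩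
          omega
        rcases le_or_gt N₁ A.card with hle | hlt
        · -- many neighbours
          have hcardA : N₁ ≤ Fintype.card ↥(↑A : Set V) := by
            simpa using hle
          rcases h₁ ↥(↑A : Set V) (G.induce ↑A) hcardA with ⟨s, hs⟩ | ⟨s, hs⟩
          · -- clique of size n in the neighbourhood: add v
            refine Or.inl ⟨insert v (s.map (Function.Embedding.subtype _)), ?_⟩
            refine (isNClique_induce_map hs).insert ?_
            intro b hb
            simp only [Finset.mem_map, Function.Embedding.coe_subtype] at hb
            obtain ⟨⟨b', hb'⟩, _, rfl⟩ := hb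
            have hadj : G.Adj v b' := by simpa [hA] using hb'
            exact hadj
          · refine Or.inr ⟨s.map (Function.Embedding.subtype _), ?_⟩
            rw [induce_compl_eq] at hs
            exact isNClique_induce_map hs
        · -- many non-neighbours
          have hcardB : N₂ ≤ Fintype.card ↥(↑B : Set V) := by
            have hBc : Fintype.card ↥(↑B : Set V) = B.card := by
              rw [Fintype.card_congr (Equiv.subtypeEquivRight (fun x => Finset.mem_coe))]
              exact Fintype.card_coe B
            omega
          rcases h₂ ↥(↑B : Set V) (G.induce ↑B) hcardB with ⟨s, hs⟩ | ⟨s, hs⟩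
          · refine Or.inl ⟨s.map (Function.Embedding.subtype _), ?_⟩
            exact isNClique_induce_map hs
          · refine Or.inr ⟨insert v (s.map (Function.Embedding.subtype _)), ?_⟩
            rw [induce_compl_eq] at hs
            refine (isNClique_induce_map hs).insert ?_
            intro b hb
            simp only [Finset.mem_map, Function.Embedding.coe_subtype] at hb
            obtain ⟨⟨b', hb'⟩, _, rfl⟩ := hb
            have h2 : ¬ G.Adj v b' ∧ b' ≠ v := by simpa [hB] using hb'
            rw [SimpleGraph.compl_adj]
            exact ⟨Ne.symm h2.2, h2.1⟩
  intro n m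
  exact main (n + m) n m le_rfl

lemma ramseyProp_ramsey (n m : ℕ) : RamseyProp (ramsey n m) n m := by
  obtain ⟨N, hN⟩ := ramsey_exists n m
  have hmem : N ∈ {N | ∀ M, N ≤ M → RamseyProp M n m} := by
    intro M hM G
    exact hN (Fin M) G (by simpa using hM)
  have := Nat.sInf_mem (⟨N, hmem⟩ : Set.Nonempty _)
  exact this (ramsey n m) le_rfl

end Ramsey
section Staged

/-- Vertex set for staged graphs: row vertices, column vertices, subdivision
vertices, and spare-column stubs for rows `≤ r`. -/
abbrev SV (n r : ℕ) := Fin n ⊕ (Fin n ⊕ ((Fin n × Fin n) ⊕ {i : Fin n // i.val ≤ r}))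

/-- Base relation for the staged graph. -/
def srel (n r : ℕ) : SV n r → SV n r → Prop
  | Sum.inl k, Sum.inr (Sum.inr (Sum.inl (i, _))) => k = i ∨ (k < i ∧ i.val ≤ r)
  | Sum.inl k, Sum.inr (Sum.inr (Sum.inr i)) => k.val ≤ i.1.val
  | Sum.inr (Sum.inr (Sum.inl (_, j))), Sum.inr (Sum.inl j') => j = j'
  | _, _ => False

/-- The staged graph at stage `r`. -/
def SB (n r : ℕ) : SimpleGraph (SV n r) := SimpleGraph.fromRel (srel n r)

/-- The relabelling map from stage `r` to stage `r+1`. -/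
def sbmap (n r : ℕ) (hr : r + 1 < n) : SV n r → SV n (r + 1)
  | Sum.inl k => if k.val = r + 1 then Sum.inr (Sum.inr (Sum.inr ⟨⟨r+1, hr⟩, le_rfl⟩))
      else Sum.inl k
  | Sum.inr (Sum.inl j) => Sum.inr (Sum.inl j)
  | Sum.inr (Sum.inr (Sum.inl p)) => Sum.inr (Sum.inr (Sum.inl p))
  | Sum.inr (Sum.inr (Sum.inr i)) => Sum.inr (Sum.inr (Sum.inr ⟨i.1, by omega⟩))

lemma sbmap_inj (n r : ℕ) (hr : r + 1 < n) : Function.Injective (sbmap n r hr) := by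
  intro a b hab
  rcases a with k | j | p | i <;> rcases b with k' | j' | p' | i' <;>
    simp only [sbmap] at hab <;>
    (try split_ifs at hab) <;>
    simp_all only [Sum.inl.injEq, Sum.inr.injEq, Subtype.mk.injEq, Fin.ext_iff,
      Prod.mk.injEq, reduceCtorEq] <;>
    first
      | rfl
      | omega
      | (have := i'.2; omega)
      | (have := i.2; omega)
      | (exact Subtype.ext (Fin.ext hab))

lemma SB_step_adj (n r : ℕ) (hr : r + 1 < n) :
    (SB n (r+1)).Adj (Sum.inl ⟨r+1, hr⟩)
      (Sum.inr (Sum.inr (Sum.inr ⟨⟨r+1, hr⟩, le_rfl⟩))) := by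
  rw [SB, SimpleGraph.fromRel_adj]
  exact ⟨by simp, Or.inl (by simp [srel])⟩

/-- The key pivot computation: pivoting the edge `x_{r+1} s_{r+1}` in the staged
graph at stage `r+1` and restricting (deleting `x_{r+1}`, renaming `s_{r+1}` to the
row vertex for row `r+1`) yields the staged graph at stage `r`. -/
lemma SB_step_eq (n r : ℕ) (hr : r + 1 < n) :
    (pivotG (SB n (r+1)) (Sum.inl ⟨r+1, hr⟩)
        (Sum.inr (Sum.inr (Sum.inr ⟨⟨r+1, hr⟩, le_rfl⟩)))).comap (sbmap n r hr)
      = SB n r := by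
  ext a b
  rcases a with k | j | ⟨i, j⟩ | ⟨i, hi⟩ <;> rcases b with k' | j' | ⟨i', j'⟩ | ⟨i', hi'⟩ <;>
    simp only [comap_adj, sbmap] <;>
    (try split_ifs) <;>
    simp only [pivotG, localComp_adj, SB, SimpleGraph.fromRel_adj, srel, ne_eq,
      Sum.inl.injEq, Sum.inr.injEq, Prod.mk.injEq, Subtype.mk.injEq, Fin.ext_iff,
      Fin.lt_def, Fin.le_def, Fin.val_mk, not_true_eq_false, not_false_eq_true,
      true_and, and_true, false_and, and_false, false_or, or_false, not_and, not_or,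
      reduceCtorEq, iff_false, iff_true, not_exists, exists_and_left, exists_and_right] <;>
    omega

end Staged
section Chain

/-- Inclusion of the vertices of `K¹_{n,n}` into the stage-0 staged graph. -/
def kmap (n : ℕ) : IVert n n → SV n 0
  | Sum.inl k => Sum.inl k
  | Sum.inr (Sum.inl j) => Sum.inr (Sum.inl j)
  | Sum.inr (Sum.inr p) => Sum.inr (Sum.inr (Sum.inl p))

lemma kmap_inj (n : ℕ) : Function.Injective (kmap n) := by
  intro a b hab
  rcases a with k | j | p <;> rcases b with k' | j' | p' <;>
    simp_all only [kmap, Sum.inl.injEq, Sum.inr.injEq, reduceCtorEq] <;> rfl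

lemma SB0_eq (n : ℕ) : (SB n 0).comap (kmap n) = KOneBip n n := by
  ext a b
  rcases a with k | j | ⟨i, j⟩ <;> rcases b with k' | j' | ⟨i', j'⟩ <;>
    simp only [comap_adj, kmap, SB, KOneBip, SimpleGraph.fromRel_adj, srel, ne_eq,
      Sum.inl.injEq, Sum.inr.injEq, Prod.mk.injEq, Fin.ext_iff, Fin.lt_def,
      reduceCtorEq, not_false_eq_true, true_and, and_true, false_and, and_false,
      false_or, or_false, exists_and_left, exists_and_right, exists_eq_left,
      exists_eq_right, exists_eq', exists_const, not_and, not_or, iff_false,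
      iff_true, exists_false, or_self, and_self] <;>
    first
      | omega
      | (constructor
         · rintro (h | ⟨h1, h2⟩)
           · exact ⟨_, h, rfl, _, rfl⟩
           · exact absurd (Fin.lt_def.mp h1) (by omega)
         · rintro ⟨i0, h1, h2, h3⟩
           exact Or.inl (by omega))
      | (constructor
         · rintro (h | ⟨h1, h2⟩)
           · exact ⟨_, h, rfl⟩
           · exact absurd (Fin.lt_def.mp h1) (by omega)
         · rintro ⟨i0, h1, h2⟩
           exact Or.inl (by omega))
      | simp_all
      | aesop

lemma hpm_SB (n : ℕ) : ∀ r, r < n → HasPivotMinor (SB n r) (KOneBip n n) := by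
  intro r
  induction r with
  | zero =>
    intro _
    have h1 : HasPivotMinor (SB n 0) ((SB n 0).comap (kmap n)) :=
      hpm_comap_inj _ _ (kmap_inj n)
    rwa [SB0_eq] at h1
  | succ r ih =>
    intro hr
    have h1 := hpm_pivot (SB_step_adj n r hr)
    have h2 := hpm_comap_inj (pivotG (SB n (r+1)) (Sum.inl ⟨r+1, hr⟩)
      (Sum.inr (Sum.inr (Sum.inr ⟨⟨r+1, hr⟩, le_rfl⟩)))) _ (sbmap_inj n r hr)
    rw [SB_step_eq n r hr] at h2
    exact hpm_trans (hpm_trans h1 h2) (ih (by omega))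

end Chain
section KOBchar

variable {n m : ℕ}

lemma kob_xz (k i : Fin n) (j : Fin m) :
    (KOneBip n m).Adj (Sum.inl k) (Sum.inr (Sum.inr (i, j))) ↔ k = i := by
  simp only [KOneBip, SimpleGraph.fromRel_adj, ne_eq, reduceCtorEq, not_false_eq_true,
    true_and, Sum.inl.injEq, Sum.inr.injEq, Prod.mk.injEq]
  constructor
  · rintro (⟨i0, j0, (⟨h1, h2, h3⟩ | ⟨h1, h2⟩)⟩ | ⟨i0, j0, (⟨h1, h2⟩ | ⟨h1, h2⟩)⟩) <;>
      simp_all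
  · rintro rfl
    exact Or.inl ⟨k, j, Or.inl ⟨rfl, rfl, rfl⟩⟩

lemma kob_yz (j : Fin m) (i : Fin n) (j' : Fin m) :
    (KOneBip n m).Adj (Sum.inr (Sum.inl j)) (Sum.inr (Sum.inr (i, j'))) ↔ j = j' := by
  simp only [KOneBip, SimpleGraph.fromRel_adj, ne_eq, reduceCtorEq, not_false_eq_true,
    true_and, Sum.inl.injEq, Sum.inr.injEq, Prod.mk.injEq]
  constructor
  · rintro (⟨i0, j0, (⟨h1, h2⟩ | ⟨h1, h2, h3⟩)⟩ | ⟨i0, j0, (⟨h1, h2⟩ | ⟨h1, h2⟩)⟩) <;>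
      simp_all
  · rintro rfl
    exact Or.inl ⟨i, j, Or.inr ⟨rfl, rfl, rfl⟩⟩

lemma kob_xx (k k' : Fin n) : ¬ (KOneBip n m).Adj (Sum.inl k) (Sum.inl k') := by
  simp [KOneBip, SimpleGraph.fromRel_adj]

lemma kob_xy (k : Fin n) (j : Fin m) :
    ¬ (KOneBip n m).Adj (Sum.inl k) (Sum.inr (Sum.inl j)) := by
  simp [KOneBip, SimpleGraph.fromRel_adj]

lemma kob_yy (j j' : Fin m) :
    ¬ (KOneBip n m).Adj (Sum.inr (Sum.inl j)) (Sum.inr (Sum.inl j')) := by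
  simp [KOneBip, SimpleGraph.fromRel_adj]

lemma kob_zz (p q : Fin n × Fin m) :
    ¬ (KOneBip n m).Adj (Sum.inr (Sum.inr p)) (Sum.inr (Sum.inr q)) := by
  simp [KOneBip, SimpleGraph.fromRel_adj]

end KOBchar
section Intf

variable {N M : ℕ} {G : SimpleGraph (IVert N M)}

lemma intf_xx (hG : IsInterfered N M G) (k k' : Fin N) :
    ¬ G.Adj (Sum.inl k) (Sum.inl k') := by
  intro h
  rcases hG.2.2 _ _ h with h' | h' <;>
    simp [InterferedAllowed] at h'

lemma intf_xy (hG : IsInterfered N M G) (k : Fin N) (j : Fin M) :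
    ¬ G.Adj (Sum.inl k) (Sum.inr (Sum.inl j)) := by
  intro h
  rcases hG.2.2 _ _ h with h' | h' <;>
    simp [InterferedAllowed] at h'

lemma intf_yy (hG : IsInterfered N M G) (j j' : Fin M) :
    ¬ G.Adj (Sum.inr (Sum.inl j)) (Sum.inr (Sum.inl j')) := by
  intro h
  rcases hG.2.2 _ _ h with h' | h' <;>
    simp [InterferedAllowed] at h'

lemma intf_zz (hG : IsInterfered N M G) (p q : Fin N × Fin M) :
    ¬ G.Adj (Sum.inr (Sum.inr p)) (Sum.inr (Sum.inr q)) := by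
  intro h
  rcases hG.2.2 _ _ h with h' | h' <;>
    simp [InterferedAllowed] at h'

lemma intf_yz_iff (hG : IsInterfered N M G) (j : Fin M) (i : Fin N) (j' : Fin M) :
    G.Adj (Sum.inr (Sum.inl j)) (Sum.inr (Sum.inr (i, j')))  ↔ j = j' := by
  constructor
  · intro h
    rcases hG.2.2 _ _ h with h' | h' <;>
      simp [InterferedAllowed] at h' <;> aesop
  · rintro rfl
    exact hG.2.1 _ _

lemma intf_xz_le (hG : IsInterfered N M G) (k i : Fin N) (j : Fin M)
    (h : G.Adj (Sum.inl k) (Sum.inr (Sum.inr (i, j)))) : k ≤ i := by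
  rcases hG.2.2 _ _ h with h' | h' <;> simp [InterferedAllowed] at h'
  exact h'.elim (fun h0 => le_of_eq h0.symm) le_of_lt

end Intf
section Select

lemma kob_zx {n m : ℕ} (k i : Fin n) (j : Fin m) :
    (KOneBip n m).Adj (Sum.inr (Sum.inr (i, j))) (Sum.inl k) ↔ k = i :=
  (SimpleGraph.adj_comm _ _ _).trans (kob_xz k i j)

lemma kob_zy {n m : ℕ} (i : Fin n) (j j' : Fin m) :
    (KOneBip n m).Adj (Sum.inr (Sum.inr (i, j'))) (Sum.inr (Sum.inl j)) ↔ j = j' :=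
  (SimpleGraph.adj_comm _ _ _).trans (kob_yz j i j')

variable {n N M : ℕ}

/-- Selection map for the clique case. -/
def selC (n : ℕ) {N M : ℕ} (er : Fin n → Fin N) (c : Fin (n+1) → Fin M) :
    SV n (n-1) → IVert N M
  | Sum.inl k => Sum.inl (er k)
  | Sum.inr (Sum.inl j) => Sum.inr (Sum.inl (c j.castSucc))
  | Sum.inr (Sum.inr (Sum.inl (i, j))) => Sum.inr (Sum.inr (er i, c j.castSucc))
  | Sum.inr (Sum.inr (Sum.inr i)) => Sum.inr (Sum.inr (er i.1, c (Fin.last n)))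

lemma selC_inj {er : Fin n → Fin N} {c : Fin (n+1) → Fin M}
    (her : Function.Injective er) (hc : Function.Injective c) :
    Function.Injective (selC n er c) := by
  intro a b hab
  rcases a with k | j | ⟨i, j⟩ | ⟨i, hi⟩ <;> rcases b with k' | j' | ⟨i', j'⟩ | ⟨i', hi'⟩ <;>
    simp only [selC, Sum.inl.injEq, Sum.inr.injEq, Prod.mk.injEq, reduceCtorEq] at hab
  · exact congrArg Sum.inl (her hab)
  · exact congrArg (fun j => Sum.inr (Sum.inl j)) (Fin.castSucc_inj.mp (hc hab))
  · obtain ⟨h1, h2⟩ := hab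
    exact congrArg (fun p => Sum.inr (Sum.inr (Sum.inl p)))
      (Prod.ext (her h1) (Fin.castSucc_inj.mp (hc h2)))
  · obtain ⟨h1, h2⟩ := hab
    exact absurd (hc h2) (Fin.castSucc_lt_last j).ne
  · obtain ⟨h1, h2⟩ := hab
    exact absurd (hc h2).symm (Fin.castSucc_lt_last j').ne
  · obtain ⟨h1, h2⟩ := hab
    exact congrArg (fun q => Sum.inr (Sum.inr (Sum.inr q))) (Subtype.ext (her h1))

/-- The key reduction for the clique case. -/
lemma selC_eq (hn : 0 < n) (G : SimpleGraph (IVert N M)) (hG : IsInterfered N M G)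
    (er : Fin n → Fin N) (c : Fin (n+1) → Fin M)
    (hc : Function.Injective c)
    (hxz : ∀ (a b : Fin n) (t : Fin (n+1)),
      G.Adj (Sum.inl (er a)) (Sum.inr (Sum.inr (er b, c t))) ↔ a ≤ b) :
    G.comap (selC n er c) = SB n (n-1) := by
  have hSB : ∀ a b : SV n (n-1), (SB n (n-1)).Adj a b ↔
      (a ≠ b ∧ (srel n (n-1) a b ∨ srel n (n-1) b a)) := fun a b => Iff.rfl
  ext a b
  rcases a with k | j | ⟨i, j⟩ | ⟨i, hi⟩ <;> rcases b with k' | j' | ⟨i', j'⟩ | ⟨i', hi'⟩ <;>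
    simp only [comap_adj, selC]
  · exact iff_of_false (intf_xx hG _ _) (by simp [SB, SimpleGraph.fromRel_adj, srel])
  · exact iff_of_false (intf_xy hG _ _) (by simp [SB, SimpleGraph.fromRel_adj, srel])
  · refine (hxz k i' j'.castSucc).trans ?_
    simp only [SB, SimpleGraph.fromRel_adj, srel, ne_eq, Sum.inr.injEq, Sum.inl.injEq, Prod.mk.injEq, reduceCtorEq, not_false_eq_true,
      true_and, or_false, false_or, Fin.ext_iff, Fin.lt_def, Fin.le_def]
    have := i'.isLt
    omega
  · refine (hxz k i' (Fin.last n)).trans ?_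
    simp only [SB, SimpleGraph.fromRel_adj, srel, ne_eq, Sum.inr.injEq, Sum.inl.injEq, Prod.mk.injEq, reduceCtorEq, not_false_eq_true,
      true_and, or_false, false_or, Fin.ext_iff, Fin.lt_def, Fin.le_def]
  · exact iff_of_false (fun h => intf_xy hG _ _ h.symm)
      (by simp [SB, SimpleGraph.fromRel_adj, srel])
  · exact iff_of_false (intf_yy hG _ _) (by simp [SB, SimpleGraph.fromRel_adj, srel])
  · refine (intf_yz_iff hG _ _ _).trans ?_
    rw [hc.eq_iff, Fin.castSucc_inj]
    simp only [SB, SimpleGraph.fromRel_adj, srel, ne_eq, Sum.inr.injEq, Sum.inl.injEq, Prod.mk.injEq, reduceCtorEq, not_false_eq_true,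
      true_and, false_or, or_false, and_true, Fin.ext_iff]
    omega
  · refine (intf_yz_iff hG _ _ _).trans ?_
    rw [hc.eq_iff]
    exact iff_of_false (Fin.castSucc_lt_last j).ne
      (by simp [SB, SimpleGraph.fromRel_adj, srel])
  · refine (SimpleGraph.adj_comm _ _ _).trans ((hxz k' i j.castSucc).trans ?_)
    simp only [SB, SimpleGraph.fromRel_adj, srel, ne_eq, Sum.inr.injEq, Sum.inl.injEq, Prod.mk.injEq, reduceCtorEq, not_false_eq_true,
      true_and, or_false, false_or, Fin.ext_iff, Fin.lt_def, Fin.le_def]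
    have := i.isLt
    omega
  · refine (SimpleGraph.adj_comm _ _ _).trans ((intf_yz_iff hG _ _ _).trans ?_)
    rw [hc.eq_iff, Fin.castSucc_inj]
    simp only [SB, SimpleGraph.fromRel_adj, srel, ne_eq, Sum.inr.injEq, Sum.inl.injEq, Prod.mk.injEq, reduceCtorEq, not_false_eq_true,
      true_and, false_or, or_false, and_true, Fin.ext_iff]
    omega
  · exact iff_of_false (intf_zz hG _ _) (by simp [SB, SimpleGraph.fromRel_adj, srel])
  · exact iff_of_false (intf_zz hG _ _) (by simp [SB, SimpleGraph.fromRel_adj, srel])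
  · refine (SimpleGraph.adj_comm _ _ _).trans ((hxz k' i (Fin.last n)).trans ?_)
    simp only [SB, SimpleGraph.fromRel_adj, srel, ne_eq, Sum.inr.injEq, Sum.inl.injEq, Prod.mk.injEq, reduceCtorEq, not_false_eq_true,
      true_and, or_false, false_or, Fin.ext_iff, Fin.lt_def, Fin.le_def]
  · refine (SimpleGraph.adj_comm _ _ _).trans ((intf_yz_iff hG _ _ _).trans ?_)
    rw [hc.eq_iff]
    exact iff_of_false (Fin.castSucc_lt_last j').ne
      (by simp [SB, SimpleGraph.fromRel_adj, srel])
  · exact iff_of_false (intf_zz hG _ _) (by simp [SB, SimpleGraph.fromRel_adj, srel])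
  · exact iff_of_false (intf_zz hG _ _) (by simp [SB, SimpleGraph.fromRel_adj, srel])

/-- Selection map for the stable case. -/
def selS (n : ℕ) {N M : ℕ} (er : Fin n → Fin N) (cc : Fin n → Fin M) :
    IVert n n → IVert N M
  | Sum.inl k => Sum.inl (er k)
  | Sum.inr (Sum.inl j) => Sum.inr (Sum.inl (cc j))
  | Sum.inr (Sum.inr (i, j)) => Sum.inr (Sum.inr (er i, cc j))

lemma selS_inj {er : Fin n → Fin N} {cc : Fin n → Fin M}
    (her : Function.Injective er) (hcc : Function.Injective cc) :
    Function.Injective (selS n er cc) := by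
  intro a b hab
  rcases a with k | j | ⟨i, j⟩ <;> rcases b with k' | j' | ⟨i', j'⟩ <;>
    simp only [selS, Sum.inl.injEq, Sum.inr.injEq, Prod.mk.injEq, reduceCtorEq] at hab
  · exact congrArg Sum.inl (her hab)
  · exact congrArg (fun j => Sum.inr (Sum.inl j)) (hcc hab)
  · obtain ⟨h1, h2⟩ := hab
    exact congrArg (fun p => Sum.inr (Sum.inr p)) (Prod.ext (her h1) (hcc h2))

/-- The key reduction for the stable case. -/
lemma selS_eq (G : SimpleGraph (IVert N M)) (hG : IsInterfered N M G)
    (er : Fin n → Fin N) (cc : Fin n → Fin M)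
    (hcc : Function.Injective cc)
    (hxz : ∀ (a b : Fin n) (t : Fin n),
      G.Adj (Sum.inl (er a)) (Sum.inr (Sum.inr (er b, cc t))) ↔ a = b) :
    G.comap (selS n er cc) = KOneBip n n := by
  ext a b
  rcases a with k | j | ⟨i, j⟩ <;> rcases b with k' | j' | ⟨i', j'⟩ <;>
    simp only [comap_adj, selS]
  · exact iff_of_false (intf_xx hG _ _) (kob_xx _ _)
  · exact iff_of_false (intf_xy hG _ _) (kob_xy _ _)
  · exact (hxz k i' j').trans (kob_xz k i' j').symm
  · exact iff_of_false (fun h => intf_xy hG _ _ h.symm)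
      (fun h => kob_xy _ _ h.symm)
  · exact iff_of_false (intf_yy hG _ _) (kob_yy _ _)
  · refine (intf_yz_iff hG _ _ _).trans ?_
    rw [hcc.eq_iff]
    exact (kob_yz j i' j').symm
  · exact (SimpleGraph.adj_comm _ _ _).trans ((hxz k' i j).trans (kob_zx k' i j).symm)
  · refine (SimpleGraph.adj_comm _ _ _).trans ((intf_yz_iff hG _ _ _).trans ?_)
    rw [hcc.eq_iff]
    exact (kob_zy i j' j).symm
  · exact iff_of_false (intf_zz hG _ _) (kob_zz _ _)

end Select
section Main

theorem main_aux (n : ℕ) (hn : 0 < n) (N₁ N₂ : ℕ)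
    (hram : RamseyProp N₁ n n)
    (hcard : 2 ^ (N₁.choose 2) * n < N₂)
    (G : SimpleGraph (IVert N₁ N₂)) (hG : IsInterfered N₁ N₂ G) :
    HasPivotMinor G (KOneBip n n) := by
  classical
  -- the pattern of a column
  set pat : Fin N₂ → ({q : Finset (Fin N₁) // q.card = 2} → Bool) := fun j q =>
    decide (∀ k i : Fin N₁, k < i → ({k, i} : Finset (Fin N₁)) = q.1 →
      G.Adj (Sum.inl k) (Sum.inr (Sum.inr (i, j)))) with hpatdef
  -- pigeonhole: n+1 columns with the same pattern
  have hcard2 : Fintype.card ({q : Finset (Fin N₁) // q.card = 2} → Bool) * n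
      < Fintype.card (Fin N₂) := by
    rw [Fintype.card_fun, Fintype.card_finset_len, Fintype.card_bool, Fintype.card_fin,
      Fintype.card_fin]
    exact hcard
  obtain ⟨p, hp⟩ := Fintype.exists_lt_card_fiber_of_mul_lt_card (f := pat) hcard2
  obtain ⟨t, hts, htcard⟩ :=
    Finset.exists_subset_card_eq (s := Finset.univ.filter (fun x => pat x = p))
      (n := n + 1) (by omega)
  set c : Fin (n+1) → Fin N₂ := fun a => t.orderEmbOfFin htcard a with hcdef
  have hcinj : Function.Injective c := (t.orderEmbOfFin htcard).injective
  have hcpat : ∀ a, pat (c a) = p := by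
    intro a
    have hmem : c a ∈ t := Finset.orderEmbOfFin_mem t htcard a
    have := hts hmem
    exact (Finset.mem_filter.mp this).2
  -- characterisation of the pattern
  have hpat : ∀ (j : Fin N₂) (k i : Fin N₁) (hki : k < i),
      pat j ⟨{k, i}, Finset.card_pair (ne_of_lt hki)⟩ = true ↔
        G.Adj (Sum.inl k) (Sum.inr (Sum.inr (i, j))) := by
    intro j k i hki
    rw [hpatdef]
    simp only [decide_eq_true_eq]
    constructor
    · intro h
      exact h k i hki rfl
    · intro hadj k' i' hk'i' heq
      have hk'm : k' ∈ ({k, i} : Finset (Fin N₁)) := by rw [← heq]; simp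
      have hi'm : i' ∈ ({k, i} : Finset (Fin N₁)) := by rw [← heq]; simp
      have hkm : k ∈ ({k', i'} : Finset (Fin N₁)) := by rw [heq]; simp
      simp only [Finset.mem_insert, Finset.mem_singleton] at hk'm hi'm hkm
      have hval : k'.val = k.val ∧ i'.val = i.val := by
        have l1 := Fin.lt_def.mp hki
        have l2 := Fin.lt_def.mp hk'i'
        simp only [Fin.ext_iff] at hk'm hi'm hkm
        omega
      have hk' : k' = k := Fin.ext hval.1
      have hi' : i' = i := Fin.ext hval.2
      subst hk'; subst hi'
      exact hadj
  -- the Ramsey graph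
  set p' : Finset (Fin N₁) → Bool :=
    fun q => if h : q.card = 2 then p ⟨q, h⟩ else false with hp'def
  set RG : SimpleGraph (Fin N₁) :=
    SimpleGraph.fromRel (fun a b => a < b ∧ p' {a, b} = true) with hRGdef
  have hkeyadj : ∀ (k i : Fin N₁), k < i → p' {k, i} = true →
      ∀ a : Fin (n+1), G.Adj (Sum.inl k) (Sum.inr (Sum.inr (i, c a))) := by
    intro k i hki hp' a
    have hcd : ({k, i} : Finset (Fin N₁)).card = 2 := Finset.card_pair (ne_of_lt hki)
    have hpt : p ⟨{k, i}, hcd⟩ = true := by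
      rw [hp'def] at hp'
      simpa [hcd] using hp'
    refine (hpat (c a) k i hki).mp ?_
    rw [hcpat a]
    exact hpt
  have hkeynadj : ∀ (k i : Fin N₁), k < i → p' {k, i} = false →
      ∀ a : Fin (n+1), ¬ G.Adj (Sum.inl k) (Sum.inr (Sum.inr (i, c a))) := by
    intro k i hki hp' a hadj
    have hcd : ({k, i} : Finset (Fin N₁)).card = 2 := Finset.card_pair (ne_of_lt hki)
    have hpt : pat (c a) ⟨{k, i}, hcd⟩ = true := (hpat (c a) k i hki).mpr hadj
    rw [hcpat a] at hpt
    rw [hp'def] at hp'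
    simp only [hcd, dif_pos] at hp'
    rw [hp'] at hpt
    exact Bool.false_ne_true hpt
  rcases hram RG with ⟨s, hs⟩ | ⟨s, hs⟩
  · -- clique case
    set er : Fin n → Fin N₁ := fun a => ((s.orderIsoOfFin hs.2) a : Fin N₁) with herdef
    have hermono : StrictMono er := by
      intro a b hab
      exact Subtype.coe_lt_coe.mpr ((s.orderIsoOfFin hs.2).strictMono hab)
    have hermem : ∀ a, er a ∈ s := fun a => ((s.orderIsoOfFin hs.2) a).2
    have hadjall : ∀ (a b : Fin n), a < b → ∀ (t0 : Fin (n+1)),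
        G.Adj (Sum.inl (er a)) (Sum.inr (Sum.inr (er b, c t0))) := by
      intro a b hab t0
      have hlt : er a < er b := hermono hab
      have hadjRG : RG.Adj (er a) (er b) := hs.1 (hermem a) (hermem b) (ne_of_lt hlt)
      have hp'2 : p' {er a, er b} = true := by
        rw [hRGdef, SimpleGraph.fromRel_adj] at hadjRG
        rcases hadjRG.2 with h | h
        · exact h.2
        · exact absurd h.1 (not_lt.mpr (le_of_lt hlt))
      exact hkeyadj (er a) (er b) hlt hp'2 t0
    have hxz : ∀ (a b : Fin n) (t0 : Fin (n+1)),
        G.Adj (Sum.inl (er a)) (Sum.inr (Sum.inr (er b, c t0))) ↔ a ≤ b := by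
      intro a b t0
      constructor
      · intro h
        exact hermono.le_iff_le.mp (intf_xz_le hG _ _ _ h)
      · intro h
        rcases eq_or_lt_of_le h with rfl | hlt
        · exact hG.1 _ _
        · exact hadjall _ _ hlt _
    have h1 : HasPivotMinor G (G.comap (selC n er c)) :=
      hpm_comap_inj G _ (selC_inj hermono.injective hcinj)
    rw [selC_eq hn G hG er c hcinj hxz] at h1
    exact hpm_trans h1 (hpm_SB n (n-1) (by omega))
  · -- stable case
    set er : Fin n → Fin N₁ := fun a => ((s.orderIsoOfFin hs.2) a : Fin N₁) with herdef
    have hermono : StrictMono er := by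
      intro a b hab
      exact Subtype.coe_lt_coe.mpr ((s.orderIsoOfFin hs.2).strictMono hab)
    have hermem : ∀ a, er a ∈ s := fun a => ((s.orderIsoOfFin hs.2) a).2
    have hnadj : ∀ (a b : Fin n), a < b → ∀ (t0 : Fin (n+1)),
        ¬ G.Adj (Sum.inl (er a)) (Sum.inr (Sum.inr (er b, c t0))) := by
      intro a b hab t0
      have hlt : er a < er b := hermono hab
      have hadjRGc : RGᶜ.Adj (er a) (er b) := hs.1 (hermem a) (hermem b) (ne_of_lt hlt)
      have hnRG : ¬ RG.Adj (er a) (er b) := hadjRGc.2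
      have hp'2 : p' {er a, er b} = false := by
        by_contra hne
        have : p' {er a, er b} = true := by
          cases hb : p' {er a, er b}
          · exact absurd hb hne
          · rfl
        exact hnRG (by
          rw [hRGdef, SimpleGraph.fromRel_adj]
          exact ⟨ne_of_lt hlt, Or.inl ⟨hlt, this⟩⟩)
      exact hkeynadj (er a) (er b) hlt hp'2 t0
    set cc : Fin n → Fin N₂ := fun j => c j.castSucc with hccdef
    have hccinj : Function.Injective cc := by
      intro a b hab
      exact Fin.castSucc_inj.mp (hcinj hab)
    have hxz : ∀ (a b t0 : Fin n),
        G.Adj (Sum.inl (er a)) (Sum.inr (Sum.inr (er b, cc t0))) ↔ a = b := by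
      intro a b t0
      constructor
      · intro h
        have hle : a ≤ b := hermono.le_iff_le.mp (intf_xz_le hG _ _ _ h)
        rcases eq_or_lt_of_le hle with rfl | hlt
        · rfl
        · exact absurd h (hnadj a b hlt t0.castSucc)
      · rintro rfl
        exact hG.1 _ _
    have h1 : HasPivotMinor G (G.comap (selS n er cc)) :=
      hpm_comap_inj G _ (selS_inj hermono.injective hccinj)
    rw [selS_eq G hG er cc hccinj hxz] at h1
    exact h1

end Main

/-- **Lemma 2.2.** With `N₁ = R(n,n)` and `N₂ = 2^{C(N₁,2)}·(n+1)`, every interfered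
`K¹_{N₁,N₂}` contains `K¹_{n,n}` as a pivot-minor. -/
theorem interfered_contains_kOneBip_as_pivotMinor (n : ℕ) (hn : 0 < n)
    (G : SimpleGraph (IVert (ramsey n n) (2 ^ ((ramsey n n).choose 2) * (n + 1))))
    (hG : IsInterfered (ramsey n n) (2 ^ ((ramsey n n).choose 2) * (n + 1)) G) :
    HasPivotMinor G (KOneBip n n) := by
  refine main_aux n hn _ _ (ramseyProp_ramsey n n) ?_ G hG
  have h2 : (0:ℕ) < 2 ^ ((ramsey n n).choose 2) := pow_pos (by norm_num) _
  exact (mul_lt_mul_iff_right₀ h2).mpr (by omega)
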